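/- Let β ∈ ℝ, θ > 0, let m be an ergodic e^{-βχ}-conformal Borel probability measure on Ω, and let m̄ be the associated measure on Ω × ℤ given by m̄(E × {n}) = e^{-nβ(1+θ)} m(E). Then: (i) m is concentrated on a single τ-orbit if and only if m̄ is concentrated on a single ℤ²-orbit; (ii) there is a nonzero finite τ-invariant measure on Ω mutually absolutely continuous with m if and only if there is a nonzero ℤ²-invariant Radon measure on Ω × ℤ mutually absolutely continuous with m̄; (iii) there is a σ-finite τ-invariant measure mutually absolutely continuous with m if and only if there is a σ-finite ℤ²-invariant measure mutually absolutely continuous with m̄. Consequently, for t ∈ {I, II₁, II_∞, III}, m is of type t if and only if m̄ is of type t. -/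

import Mathlib

/-!
STATEMENT 4. Let β ∈ ℝ, θ > 0, m an ergodic e^{-βχ}-conformal probability measure on Ω,
and m̄ the associated measure on Ω × ℤ, m̄(E × {n}) = e^{-nβ(1+θ)} m(E). Then:
(i) m is concentrated on a single τ-orbit iff m̄ is concentrated on a single ℤ²-orbit;
(ii) there is a nonzero finite τ-invariant measure mutually absolutely continuous with m
iff there is a nonzero ℤ²-invariant Radon measure mutually absolutely continuous with m̄;
(iii) there is a σ-finite τ-invariant measure mutually a.c. with m iff there is a σ-finite
ℤ²-invariant measure mutually a.c. with m̄. Consequently, for t ∈ {I, II₁, II_∞, III},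
m is of type t iff m̄ is of type t.
-/

open MeasureTheory Real

namespace Stmt4

abbrev Omega : Type := ℤ → Bool

def shift (x : Omega) : Omega := fun k => x (k - 1)

def bval (b : Bool) : ℤ := if b then 1 else 0

noncomputable def chi (θ : ℝ) (x : Omega) : ℝ := if x (-1) = false then 1 else -θ

def IsConformal (β θ : ℝ) (m : Measure Omega) : Prop :=
  ∀ B : Set Omega, MeasurableSet B →
    m (shift '' B) = ∫⁻ x in B, ENNReal.ofReal (Real.exp (-β * chi θ x)) ∂m

def ErgodicShift (m : Measure Omega) : Prop :=
  ∀ B : Set Omega, MeasurableSet B → shift ⁻¹' B = B → m B = 0 ∨ m Bᶜ = 0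

def ShiftInvariant (ν : Measure Omega) : Prop :=
  ∀ B : Set Omega, MeasurableSet B → ν (shift ⁻¹' B) = ν B

/-- The τ-orbit of x. -/
def orbitτ (x : Omega) : Set Omega := {y | ∃ n : ℤ, y = fun k => x (k - n)}

def S (x : Omega) (m : ℤ) : ℤ :=
  if 0 ≤ m then ∑ j ∈ Finset.range m.toNat, bval (x j)
  else - ∑ j ∈ Finset.range (-m).toNat, bval (x (-(j : ℤ) - 1))

/-- The ℤ²-action on Ω × ℤ generated by v₁ = (1,0) : (x,t) ↦ (τx, t + x_{-1}) and
v₂ = (1,1) : (x,t) ↦ (x, t+1). -/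
def act (v : ℤ × ℤ) (z : Omega × ℤ) : Omega × ℤ :=
  (fun k => z.1 (k - (v.1 - v.2)), z.2 + v.2 - S z.1 (v.2 - v.1))

/-- The ℤ²-orbit of z ∈ Ω × ℤ. -/
def orbitZ2 (z : Omega × ℤ) : Set (Omega × ℤ) := {w | ∃ v : ℤ × ℤ, w = act v z}

def IsRadon (μ : Measure (Omega × ℤ)) : Prop :=
  ∀ K : Set (Omega × ℤ), IsCompact K → μ K < ⊤

def InvariantZ2 (ν : Measure (Omega × ℤ)) : Prop :=
  ∀ v : ℤ × ℤ, ∀ E : Set (Omega × ℤ), MeasurableSet E → ν (act v '' E) = ν E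

/-- The measure m̄ on Ω × ℤ with m̄(E × {n}) = e^{-nβ(1+θ)} m(E). -/
noncomputable def mbar (β θ : ℝ) (m : Measure Omega) : Measure (Omega × ℤ) :=
  Measure.sum fun n : ℤ =>
    ENNReal.ofReal (Real.exp (-(n : ℝ) * β * (1 + θ))) •
      Measure.map (fun x => (x, n)) m

/-! Type predicates on each side. -/

/-- m is of type I : concentrated on a single τ-orbit. -/
def TypeIτ (m : Measure Omega) : Prop := ∃ x : Omega, m (orbitτ x)ᶜ = 0

/-- there is a nonzero finite τ-invariant measure mutually a.c. with m. -/
def FinInvτ (m : Measure Omega) : Prop :=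
  ∃ ν : Measure Omega, ν ≠ 0 ∧ IsFiniteMeasure ν ∧ ShiftInvariant ν ∧ ν ≪ m ∧ m ≪ ν

/-- there is a σ-finite τ-invariant measure mutually a.c. with m. -/
def SigInvτ (m : Measure Omega) : Prop :=
  ∃ ν : Measure Omega, SigmaFinite ν ∧ ShiftInvariant ν ∧ ν ≪ m ∧ m ≪ ν

def TypeII1τ (m : Measure Omega) : Prop := ¬ TypeIτ m ∧ FinInvτ m
def TypeIIinfτ (m : Measure Omega) : Prop := ¬ TypeIτ m ∧ SigInvτ m ∧ ¬ FinInvτ m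
def TypeIIIτ (m : Measure Omega) : Prop := ¬ SigInvτ m

/-- m̄ is of type I : concentrated on a single ℤ²-orbit. -/
def TypeIZ2 (μ : Measure (Omega × ℤ)) : Prop := ∃ z : Omega × ℤ, μ (orbitZ2 z)ᶜ = 0

/-- there is a nonzero ℤ²-invariant Radon measure mutually a.c. with μ. -/
def RadInvZ2 (μ : Measure (Omega × ℤ)) : Prop :=
  ∃ ν : Measure (Omega × ℤ), ν ≠ 0 ∧ IsRadon ν ∧ InvariantZ2 ν ∧ ν ≪ μ ∧ μ ≪ ν

/-- there is a σ-finite ℤ²-invariant measure mutually a.c. with μ. -/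
def SigInvZ2 (μ : Measure (Omega × ℤ)) : Prop :=
  ∃ ν : Measure (Omega × ℤ), SigmaFinite ν ∧ InvariantZ2 ν ∧ ν ≪ μ ∧ μ ≪ ν

def TypeII1Z2 (μ : Measure (Omega × ℤ)) : Prop := ¬ TypeIZ2 μ ∧ RadInvZ2 μ
def TypeIIinfZ2 (μ : Measure (Omega × ℤ)) : Prop := ¬ TypeIZ2 μ ∧ SigInvZ2 μ ∧ ¬ RadInvZ2 μ
def TypeIIIZ2 (μ : Measure (Omega × ℤ)) : Prop := ¬ SigInvZ2 μ



section Aux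
open Set
open scoped ENNReal

def T (n : ℤ) (x : Omega) : Omega := fun k => x (k - n)

lemma T_T (p q : ℤ) (x : Omega) : T p (T q x) = T (p + q) x := by
  funext k; simp only [T]; congr 1; ring

@[simp] lemma T_zero (x : Omega) : T 0 x = x := by funext k; simp [T]

lemma shift_eq : shift = T 1 := rfl

lemma measurable_T (n : ℤ) : Measurable (T n) :=
  measurable_pi_lambda _ fun k => measurable_pi_apply _

@[simp] lemma S_zero (x : Omega) : S x 0 = 0 := by simp [S]

lemma S_succ (x : Omega) (m : ℤ) : S x (m + 1) = S x m + bval (x m) := by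
  unfold S
  rcases le_or_gt 0 m with h | h
  · rw [if_pos (by omega), if_pos h]
    have h1 : (m + 1).toNat = m.toNat + 1 := by omega
    rw [h1, Finset.sum_range_succ, Int.toNat_of_nonneg h]
  · rcases eq_or_lt_of_le (show m + 1 ≤ 0 by omega) with h1 | h1
    · have hm : m = -1 := by omega
      subst hm
      norm_num
    · rw [if_neg (by omega), if_neg (by omega)]
      have h2 : (-m).toNat = (-(m + 1)).toNat + 1 := by omega
      rw [h2, Finset.sum_range_succ]
      have h3 : (-((-(m + 1)).toNat : ℤ) - 1) = m := by omega
      rw [h3]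
      ring

lemma S_pred (x : Omega) (m : ℤ) : S x (m - 1) = S x m - bval (x (m - 1)) := by
  have := S_succ x (m - 1)
  simp only [sub_add_cancel] at this
  omega

lemma S_cocycle (x : Omega) (p q : ℤ) : S x (p + q) = S x p + S (T (-p) x) q := by
  induction q using Int.induction_on with
  | zero => simp
  | succ q ih =>
      have h1 : p + (q + 1) = (p + q) + 1 := by ring
      rw [h1, S_succ, ih, S_succ]
      have h2 : T (-p) x (q : ℤ) = x ((q : ℤ) + p) := by
        show x ((q:ℤ) - -p) = x ((q:ℤ) + p); congr 1; ring
      rw [h2]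
      have h3 : p + (q:ℤ) = (q:ℤ) + p := by ring
      rw [h3]
      ring
  | pred q ih =>
      have h1 : p + (-(q:ℤ) - 1) = (p + -(q:ℤ)) - 1 := by ring
      rw [h1, S_pred, ih, S_pred]
      have h2 : T (-p) x (-(q:ℤ) - 1) = x (p + -(q:ℤ) - 1) := by
        show x (-(q:ℤ) - 1 - -p) = x (p + -(q:ℤ) - 1); congr 1; ring
      rw [h2]
      ring

lemma S_T (y : Omega) (p : ℤ) : S (T p y) p = - S y (-p) := by
  have h := S_cocycle (T p y) p (-p)
  simp only [add_neg_cancel, S_zero, T_T, neg_add_cancel, T_zero] at h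
  omega

lemma measurable_S (q : ℤ) : Measurable (fun x : Omega => S x q) := by
  have hb : ∀ j : ℤ, Measurable (fun x : Omega => bval (x j)) := fun j =>
    (measurable_from_top : Measurable bval).comp (measurable_pi_apply _)
  unfold S
  split
  · exact Finset.measurable_sum _ fun j _ => hb _
  · exact (Finset.measurable_sum _ fun j _ => hb _).neg
lemma act_def (v : ℤ × ℤ) (z : Omega × ℤ) :
    act v z = (T (v.1 - v.2) z.1, z.2 + v.2 - S z.1 (v.2 - v.1)) := rfl

@[simp] lemma act_zero (z : Omega × ℤ) : act 0 z = z := by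
  cases z with
  | mk x t => simp [act_def, Prod.ext_iff]

lemma act_act (v w : ℤ × ℤ) (z : Omega × ℤ) : act v (act w z) = act (v + w) z := by
  cases z with
  | mk x t =>
    obtain ⟨a, b⟩ := v
    obtain ⟨c, d⟩ := w
    simp only [act_def, T_T, Prod.mk.injEq, Prod.fst_add, Prod.snd_add]
    constructor
    · congr 1; ring
    · have hc : S x ((d - c) + (b - a)) = S x (d - c) + S (T (-(d - c)) x) (b - a) :=
        S_cocycle x (d - c) (b - a)
      have h1 : (-(d - c)) = c - d := by ring
      rw [h1] at hc
      have h2 : (b + d) - (a + c) = (d - c) + (b - a) := by ring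
      rw [h2, hc]
      ring

lemma act_left_inv (v : ℤ × ℤ) (z : Omega × ℤ) : act (-v) (act v z) = z := by
  rw [act_act, neg_add_cancel, act_zero]

lemma act_right_inv (v : ℤ × ℤ) (z : Omega × ℤ) : act v (act (-v) z) = z := by
  rw [act_act, add_neg_cancel, act_zero]

lemma act_image (v : ℤ × ℤ) (E : Set (Omega × ℤ)) : act v '' E = act (-v) ⁻¹' E := by
  ext z
  constructor
  · rintro ⟨w, hw, rfl⟩
    simpa [act_left_inv] using hw
  · intro hz
    exact ⟨act (-v) z, hz, act_right_inv v z⟩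

lemma measurable_act (v : ℤ × ℤ) : Measurable (act v) := by
  obtain ⟨a, b⟩ := v
  apply Measurable.prod
  · exact (measurable_T (a - b)).comp measurable_fst
  · have h1 : Measurable (fun z : Omega × ℤ => S z.1 (b - a)) :=
      (measurable_S (b - a)).comp measurable_fst
    have hsub : Measurable (fun p : ℤ × ℤ => p.1 + b - p.2) := by measurability
    exact hsub.comp (measurable_snd.prodMk h1)
/-- The slice of a set in `Ω × ℤ` at level `n`. -/
def slice (A : Set (Omega × ℤ)) (n : ℤ) : Set Omega := (fun x => (x, n)) ⁻¹' A

lemma measurable_iota (n : ℤ) : Measurable (fun x : Omega => (x, n)) :=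
  measurable_id.prodMk measurable_const

lemma measurableSet_slice {A : Set (Omega × ℤ)} (hA : MeasurableSet A) (n : ℤ) :
    MeasurableSet (slice A n) := (measurable_iota n) hA

lemma slice_mono {A B : Set (Omega × ℤ)} (h : A ⊆ B) (n : ℤ) : slice A n ⊆ slice B n :=
  fun _ hx => h hx

open Classical in
lemma slice_prod (B : Set Omega) (s : Set ℤ) (n : ℤ) :
    slice (B ×ˢ s) n = if n ∈ s then B else ∅ := by
  ext x; by_cases h : n ∈ s <;> simp [slice, h]

/-- Weighted lift of a measure on `Ω` to `Ω × ℤ`. -/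
noncomputable def liftc (c : ℤ → ℝ≥0∞) (ν : Measure Omega) : Measure (Omega × ℤ) :=
  Measure.sum fun n : ℤ => c n • Measure.map (fun x => (x, n)) ν

lemma liftc_apply (c : ℤ → ℝ≥0∞) (ν : Measure Omega) {A : Set (Omega × ℤ)}
    (hA : MeasurableSet A) : liftc c ν A = ∑' n : ℤ, c n * ν (slice A n) := by
  rw [liftc, Measure.sum_apply _ hA]
  congr 1
  funext n
  rw [Measure.smul_apply, Measure.map_apply (measurable_iota n) hA]
  rfl

lemma liftc_prod_singleton (c : ℤ → ℝ≥0∞) (ν : Measure Omega) {B : Set Omega}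
    (hB : MeasurableSet B) (n : ℤ) : liftc c ν (B ×ˢ ({n} : Set ℤ)) = c n * ν B := by
  rw [liftc_apply c ν (hB.prod (measurableSet_singleton n))]
  rw [tsum_eq_single n]
  · rw [slice_prod]; simp
  · intro j hj
    rw [slice_prod]
    simp [hj]

lemma liftc_null_iff {c : ℤ → ℝ≥0∞} (hc : ∀ n, c n ≠ 0) (hc' : ∀ n, c n ≠ ⊤)
    (ν : Measure Omega) (A : Set (Omega × ℤ)) :
    liftc c ν A = 0 ↔ ∀ n : ℤ, ν (slice A n) = 0 := by
  constructor
  · intro h n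
    set A' := toMeasurable (liftc c ν) A with hA'
    have hm : MeasurableSet A' := measurableSet_toMeasurable _ _
    have h0 : liftc c ν A' = 0 := by rw [hA', measure_toMeasurable]; exact h
    rw [liftc_apply c ν hm, ENNReal.tsum_eq_zero] at h0
    have := h0 n
    rcases mul_eq_zero.1 this with h1 | h1
    · exact absurd h1 (hc n)
    · exact measure_mono_null (slice_mono (subset_toMeasurable _ _) n) h1
  · intro h
    have hsub : A ⊆ ⋃ n : ℤ, (toMeasurable ν (slice A n)) ×ˢ ({n} : Set ℤ) := by
      rintro ⟨x, t⟩ hxt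
      exact mem_iUnion.2 ⟨t, ⟨subset_toMeasurable _ _ hxt, rfl⟩⟩
    refine measure_mono_null hsub (le_antisymm ?_ (by simp))
    calc liftc c ν (⋃ n : ℤ, (toMeasurable ν (slice A n)) ×ˢ ({n} : Set ℤ))
        ≤ ∑' n : ℤ, liftc c ν ((toMeasurable ν (slice A n)) ×ˢ ({n} : Set ℤ)) :=
          measure_iUnion_le _
      _ = 0 := by
          rw [ENNReal.tsum_eq_zero]
          intro n
          rw [liftc_prod_singleton c ν (measurableSet_toMeasurable _ _) n,
            measure_toMeasurable, h n, mul_zero]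

lemma liftc_ac {c c' : ℤ → ℝ≥0∞} (hc : ∀ n, c n ≠ 0) (hc' : ∀ n, c n ≠ ⊤)
    (hd : ∀ n, c' n ≠ 0) (hd' : ∀ n, c' n ≠ ⊤)
    {ν μ : Measure Omega} (h : ν ≪ μ) : liftc c ν ≪ liftc c' μ := by
  intro A hA
  rw [liftc_null_iff hd hd'] at hA
  rw [liftc_null_iff hc hc']
  exact fun n => h (hA n)
lemma shiftInv_T_preimage {ν : Measure Omega} (hν : ShiftInvariant ν) (n : ℤ)
    {B : Set Omega} (hB : MeasurableSet B) : ν (T n ⁻¹' B) = ν B := by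
  induction n using Int.induction_on with
  | zero =>
      have h : T 0 ⁻¹' B = B := by ext x; simp [Set.mem_preimage, T_zero]
      rw [h]
  | succ k ih =>
      have h1 : T ((k : ℤ) + 1) ⁻¹' B = shift ⁻¹' (T k ⁻¹' B) := by
        ext x
        show T (k + 1) x ∈ B ↔ T k (shift x) ∈ B
        rw [shift_eq, T_T]
      rw [h1, hν _ ((measurable_T k) hB), ih]
  | pred k ih =>
      have key : ∀ C : Set Omega, MeasurableSet C → ν (T (-1) ⁻¹' C) = ν C := by
        intro C hC
        have h2 : shift ⁻¹' (T (-1) ⁻¹' C) = C := by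
          ext x
          show T (-1) (shift x) ∈ C ↔ x ∈ C
          rw [shift_eq, T_T]
          norm_num
        have := hν _ ((measurable_T (-1)) hC)
        rw [h2] at this
        exact this.symm
      have h1 : T (-(k : ℤ) - 1) ⁻¹' B = T (-1) ⁻¹' (T (-k) ⁻¹' B) := by
        ext x
        show T (-k - 1) x ∈ B ↔ T (-k) (T (-1) x) ∈ B
        rw [T_T, show (-(k:ℤ)) + -1 = -(k:ℤ) - 1 by ring]
      rw [h1, key _ ((measurable_T (-k)) hB), ih]

lemma T_image (n : ℤ) (B : Set Omega) : T n '' B = T (-n) ⁻¹' B := by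
  ext y
  constructor
  · rintro ⟨x, hx, rfl⟩
    show T (-n) (T n x) ∈ B
    rw [T_T]; simpa
  · intro hy
    refine ⟨T (-n) y, hy, ?_⟩
    rw [T_T]; simp

lemma shiftInv_T_image {ν : Measure Omega} (hν : ShiftInvariant ν) (n : ℤ)
    {B : Set Omega} (hB : MeasurableSet B) : ν (T n '' B) = ν B := by
  rw [T_image]
  exact shiftInv_T_preimage hν (-n) hB

/-- The unweighted lift. -/
noncomputable def lift (ν : Measure Omega) : Measure (Omega × ℤ) :=
  liftc (fun _ => 1) ν

lemma lift_apply (ν : Measure Omega) {A : Set (Omega × ℤ)} (hA : MeasurableSet A) :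
    lift ν A = ∑' n : ℤ, ν (slice A n) := by
  rw [lift, liftc_apply _ _ hA]
  simp

lemma lift_invariant {ν : Measure Omega} (hν : ShiftInvariant ν) : InvariantZ2 (lift ν) := by
  intro v E hE
  obtain ⟨a, b⟩ := v
  set p := a - b with hp
  rw [act_image, lift_apply ν ((measurable_act _) hE)]
  -- identify the slices
  have hslice : ∀ n : ℤ, slice (act (-(a, b)) ⁻¹' E) n
      = T p '' ((fun y => (y, n - b + S y (-p))) ⁻¹' E) := by
    intro n
    ext x
    constructor
    · intro hx
      have hx' : (T (-p) x, n - b - S x p) ∈ E := by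
        have : act (-(a, b)) (x, n) = (T (-p) x, n - b - S x p) := by
          rw [act_def]
          simp only [Prod.fst_neg, Prod.snd_neg, Prod.mk.injEq]
          constructor
          · show T (-a - -b) x = T (-p) x
            rw [show (-a - -b : ℤ) = -p by omega]
          · have : (-b : ℤ) - -a = p := by omega
            rw [this]; ring
        rw [← this]; exact hx
      refine ⟨T (-p) x, ?_, by rw [T_T]; simp⟩
      show (T (-p) x, n - b + S (T (-p) x) (-p)) ∈ E
      have hS : S (T (-p) x) (-p) = - S x p := by
        have := S_T (T (-p) x) (-p)  -- no; use S_T with y := x, p := -p? compute directly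
        -- S (T (-p) x) (-p) = - S x (-(-p)) = - S x p by S_T applied to y := x with p := -p
        have h2 := S_T x (-p)
        -- h2 : S (T (-p) x) (-p) = - S x p
        simpa using h2
      rw [hS]
      have : n - b + -S x p = n - b - S x p := by ring
      rw [this]
      exact hx'
    · rintro ⟨y, hy, rfl⟩
      show act (-(a, b)) (T p y, n) ∈ E
      have : act (-(a, b)) (T p y, n) = (y, n - b + S y (-p)) := by
        rw [act_def]
        simp only [Prod.fst_neg, Prod.snd_neg, Prod.mk.injEq]
        constructor
        · show T (-a - -b) (T p y) = y
          rw [T_T]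
          have : (-a - -b) + p = 0 := by omega
          rw [this, T_zero]
        · have h3 : (-b : ℤ) - -a = p := by omega
          rw [h3, S_T y p]
          ring
      rw [this]
      exact hy
  -- measurable map y ↦ (y, n - b + S y (-p))
  have hmeas : ∀ n : ℤ, Measurable (fun y : Omega => (y, n - b + S y (-p))) := by
    intro n
    refine measurable_id.prodMk ?_
    have h1 : Measurable (fun y : Omega => S y (-p)) := measurable_S (-p)
    have h2 : Measurable (fun t : ℤ => n - b + t) := measurable_from_top
    exact h2.comp h1
  have hDmeas : ∀ n : ℤ, MeasurableSet ((fun y : Omega => (y, n - b + S y (-p))) ⁻¹' E) :=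
    fun n => (hmeas n) hE
  -- rewrite the sum using shift invariance
  have step1 : ∀ n : ℤ, ν (slice (act (-(a, b)) ⁻¹' E) n)
      = ν ((fun y : Omega => (y, n - b + S y (-p))) ⁻¹' E) := by
    intro n
    rw [hslice n]
    exact shiftInv_T_image hν p (hDmeas n)
  -- decompose by the value of S y (-p)
  have hC : ∀ s : ℤ, MeasurableSet {y : Omega | S y (-p) = s} :=
    fun s => (measurable_S (-p)) (measurableSet_singleton s)
  have hdecomp : ∀ n : ℤ, ((fun y : Omega => (y, n - b + S y (-p))) ⁻¹' E)
      = ⋃ s : ℤ, ({y : Omega | S y (-p) = s} ∩ slice E (n - b + s)) := by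
    intro n
    ext y
    simp only [mem_preimage, mem_iUnion, mem_inter_iff, mem_setOf_eq]
    constructor
    · intro hy
      exact ⟨S y (-p), rfl, hy⟩
    · rintro ⟨s, hs, hy⟩
      rw [← hs] at hy
      exact hy
  have hdisj : ∀ n : ℤ, Pairwise (Function.onFun Disjoint
      (fun s : ℤ => {y : Omega | S y (-p) = s} ∩ slice E (n - b + s))) := by
    intro n s t hst
    refine Set.disjoint_left.2 ?_
    rintro y ⟨hy1, _⟩ ⟨hy2, _⟩
    exact hst (hy1.symm.trans hy2)
  have step2 : ∀ n : ℤ, ν ((fun y : Omega => (y, n - b + S y (-p))) ⁻¹' E)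
      = ∑' s : ℤ, ν ({y : Omega | S y (-p) = s} ∩ slice E (n - b + s)) := by
    intro n
    rw [hdecomp n]
    exact measure_iUnion (hdisj n) (fun s => (hC s).inter (measurableSet_slice hE _))
  calc (∑' n : ℤ, ν (slice (act (-(a, b)) ⁻¹' E) n))
      = ∑' n : ℤ, ∑' s : ℤ, ν ({y : Omega | S y (-p) = s} ∩ slice E (n - b + s)) := by
        congr 1; funext n; rw [step1 n, step2 n]
    _ = ∑' s : ℤ, ∑' n : ℤ, ν ({y : Omega | S y (-p) = s} ∩ slice E (n - b + s)) :=
        ENNReal.tsum_comm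
    _ = ∑' s : ℤ, ∑' n : ℤ, ν ({y : Omega | S y (-p) = s} ∩ slice E n) := by
        congr 1; funext s
        have h := (Equiv.addRight (-b + s)).tsum_eq
          (fun n : ℤ => ν ({y : Omega | S y (-p) = s} ∩ slice E n))
        simp only [Equiv.coe_addRight] at h
        rw [← h]
        congr 1; funext n
        rw [show n - b + s = n + (-b + s) by ring]
    _ = ∑' n : ℤ, ∑' s : ℤ, ν ({y : Omega | S y (-p) = s} ∩ slice E n) :=
        ENNReal.tsum_comm
    _ = ∑' n : ℤ, ν (slice E n) := by
        congr 1; funext n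
        rw [← measure_iUnion ?_ (fun s => (hC s).inter (measurableSet_slice hE _))]
        · congr 1
          ext y
          simp only [mem_iUnion, mem_inter_iff, mem_setOf_eq]
          constructor
          · rintro ⟨s, _, hy⟩; exact hy
          · intro hy; exact ⟨S y (-p), rfl, hy⟩
        · intro s t hst
          refine Set.disjoint_left.2 ?_
          rintro y ⟨hy1, _⟩ ⟨hy2, _⟩
          exact hst (hy1.symm.trans hy2)
    _ = lift ν E := (lift_apply ν hE).symm
/-- Restriction of a measure on `Ω × ℤ` to the fiber over `0`. -/
noncomputable def fib (lam : Measure (Omega × ℤ)) : Measure Omega :=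
  Measure.map Prod.fst (lam.restrict (Set.univ ×ˢ ({0} : Set ℤ)))

lemma fib_apply (lam : Measure (Omega × ℤ)) {B : Set Omega} (hB : MeasurableSet B) :
    fib lam B = lam (B ×ˢ ({0} : Set ℤ)) := by
  rw [fib, Measure.map_apply measurable_fst hB,
    Measure.restrict_apply (measurable_fst hB)]
  congr 1
  ext ⟨x, t⟩
  simp only [mem_inter_iff, mem_preimage, mem_prod, mem_univ, mem_singleton_iff, true_and]

lemma act_one_zero (x : Omega) (t : ℤ) :
    act (1, 0) (x, t) = (shift x, t + bval (x (-1))) := by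
  rw [act_def]
  simp only [Prod.mk.injEq]
  constructor
  · rfl
  · rw [show ((0:ℤ) - 1) = (-1 : ℤ) by norm_num]
    have h1 : S x (-1 : ℤ) = - bval (x (-1)) := by
      norm_num [S, Finset.sum_range_one]
    rw [h1]
    ring

lemma act_diag (n : ℤ) (x : Omega) (t : ℤ) : act (n, n) (x, t) = (x, t + n) := by
  rw [act_def]
  simp only [sub_self, T_zero, S_zero, Prod.mk.injEq]
  exact ⟨trivial, by ring⟩

lemma act_diag_image (n : ℤ) (B : Set Omega) (t : ℤ) :
    act (n, n) '' (B ×ˢ ({t} : Set ℤ)) = B ×ˢ ({t + n} : Set ℤ) := by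
  ext ⟨y, s⟩
  constructor
  · rintro ⟨⟨x, u⟩, ⟨hx, hu⟩, h⟩
    rw [act_diag] at h
    obtain ⟨h1, h2⟩ := Prod.mk.injEq .. ▸ h
    cases h
    simp only [mem_singleton_iff] at hu
    exact ⟨hx, by simp [hu]⟩
  · rintro ⟨hy, hs⟩
    simp only [mem_singleton_iff] at hs
    exact ⟨(y, t), ⟨hy, rfl⟩, by rw [act_diag, hs]⟩

lemma fib_shiftInvariant {lam : Measure (Omega × ℤ)} (hlam : InvariantZ2 lam) :
    ShiftInvariant (fib lam) := by
  have hmeas_shift_img : ∀ B : Set Omega, MeasurableSet B → MeasurableSet (shift '' B) := by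
    intro B hB
    rw [shift_eq, T_image]
    exact (measurable_T (-1)) hB
  have key : ∀ B : Set Omega, MeasurableSet B →
      lam ((shift '' B) ×ˢ ({0} : Set ℤ)) = lam (B ×ˢ ({0} : Set ℤ)) := by
    intro B hB
    set B0 := B ∩ {x : Omega | x (-1) = false} with hB0
    set B1 := B ∩ {x : Omega | x (-1) = true} with hB1
    have hmb : ∀ c : Bool, MeasurableSet {x : Omega | x (-1) = c} := by
      intro c
      have h : {x : Omega | x (-1) = c} = (fun x : Omega => x (-1)) ⁻¹' {c} := rfl
      rw [h]
      exact (measurable_pi_apply (-1)) (measurableSet_singleton c)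
    have hmB0 : MeasurableSet B0 := hB.inter (hmb false)
    have hmB1 : MeasurableSet B1 := hB.inter (hmb true)
    have hunion : B = B0 ∪ B1 := by
      ext x
      rcases Bool.eq_false_or_eq_true (x (-1)) with h | h <;> simp [hB0, hB1, h]
    have hdisj : Disjoint B0 B1 := by
      refine Set.disjoint_left.2 ?_
      rintro x ⟨_, h0⟩ ⟨_, h1⟩
      simp only [mem_setOf_eq] at h0 h1
      rw [h0] at h1; exact Bool.noConfusion h1
    -- image identities
    have h0img : act (1, 0) '' (B0 ×ˢ ({0} : Set ℤ)) = (shift '' B0) ×ˢ ({0} : Set ℤ) := by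
      ext ⟨y, s⟩
      constructor
      · rintro ⟨⟨x, u⟩, ⟨hx, hu⟩, h⟩
        simp only [mem_singleton_iff] at hu
        subst hu
        rw [act_one_zero] at h
        have hx0 : bval (x (-1)) = 0 := by
          have := hx.2; simp only [mem_setOf_eq] at this; simp [bval, this]
        cases h
        exact ⟨⟨x, hx, rfl⟩, by simp [hx0]⟩
      · rintro ⟨⟨x, hx, rfl⟩, hs⟩
        simp only [mem_singleton_iff] at hs
        have hx0 : bval (x (-1)) = 0 := by
          have := hx.2; simp only [mem_setOf_eq] at this; simp [bval, this]
        exact ⟨(x, 0), ⟨hx, rfl⟩, by rw [act_one_zero, hx0, hs]; norm_num⟩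
    have h1img : act (1, 0) '' (B1 ×ˢ ({0} : Set ℤ)) = (shift '' B1) ×ˢ ({1} : Set ℤ) := by
      ext ⟨y, s⟩
      constructor
      · rintro ⟨⟨x, u⟩, ⟨hx, hu⟩, h⟩
        simp only [mem_singleton_iff] at hu
        subst hu
        rw [act_one_zero] at h
        have hx1 : bval (x (-1)) = 1 := by
          have := hx.2; simp only [mem_setOf_eq] at this; simp [bval, this]
        cases h
        exact ⟨⟨x, hx, rfl⟩, by simp [hx1]⟩
      · rintro ⟨⟨x, hx, rfl⟩, hs⟩
        simp only [mem_singleton_iff] at hs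
        have hx1 : bval (x (-1)) = 1 := by
          have := hx.2; simp only [mem_setOf_eq] at this; simp [bval, this]
        exact ⟨(x, 0), ⟨hx, rfl⟩, by rw [act_one_zero, hx1, hs]; norm_num⟩
    have h2img : act (1, 1) '' ((shift '' B1) ×ˢ ({0} : Set ℤ))
        = (shift '' B1) ×ˢ ({1} : Set ℤ) := by
      have := act_diag_image 1 (shift '' B1) 0
      simpa using this
    -- measure computations
    have m0 : lam ((shift '' B0) ×ˢ ({0} : Set ℤ)) = lam (B0 ×ˢ ({0} : Set ℤ)) := by
      rw [← h0img]
      exact hlam (1, 0) _ (hmB0.prod (measurableSet_singleton 0))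
    have m1 : lam ((shift '' B1) ×ˢ ({1} : Set ℤ)) = lam (B1 ×ˢ ({0} : Set ℤ)) := by
      rw [← h1img]
      exact hlam (1, 0) _ (hmB1.prod (measurableSet_singleton 0))
    have m2 : lam ((shift '' B1) ×ˢ ({1} : Set ℤ)) = lam ((shift '' B1) ×ˢ ({0} : Set ℤ)) := by
      rw [← h2img]
      exact hlam (1, 1) _ ((hmeas_shift_img _ hmB1).prod (measurableSet_singleton 0))
    have hsplit : (shift '' B) ×ˢ ({0} : Set ℤ)
        = (shift '' B0) ×ˢ ({0} : Set ℤ) ∪ (shift '' B1) ×ˢ ({0} : Set ℤ) := by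
      rw [hunion, image_union, union_prod]
    have hdisj2 : Disjoint ((shift '' B0) ×ˢ ({0} : Set ℤ))
        ((shift '' B1) ×ˢ ({0} : Set ℤ)) := by
      have hinj : Function.Injective shift := by
        intro x y h
        funext k
        have := congrFun h (k + 1)
        simpa [shift] using this
      refine Set.disjoint_left.2 ?_
      rintro ⟨y, s⟩ ⟨hy0, _⟩ ⟨hy1, _⟩
      obtain ⟨x0, hx0, rfl⟩ := hy0
      obtain ⟨x1, hx1, heq⟩ := hy1
      have : x1 = x0 := hinj heq
      subst this
      exact Set.disjoint_left.1 hdisj hx0 hx1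
    have hsplitB : lam (B ×ˢ ({0} : Set ℤ))
        = lam (B0 ×ˢ ({0} : Set ℤ)) + lam (B1 ×ˢ ({0} : Set ℤ)) := by
      rw [hunion, union_prod]
      refine measure_union ?_ (hmB1.prod (measurableSet_singleton 0))
      refine Set.disjoint_left.2 ?_
      rintro ⟨x, t⟩ ⟨h0, _⟩ ⟨h1, _⟩
      exact Set.disjoint_left.1 hdisj h0 h1
    rw [hsplit, measure_union hdisj2 ((hmeas_shift_img _ hmB1).prod (measurableSet_singleton 0)),
      m0, ← m2, m1, hsplitB]
  -- conclude shift invariance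
  intro B hB
  have hpre : MeasurableSet (shift ⁻¹' B) := by
    rw [shift_eq]; exact (measurable_T 1) hB
  have hsurj : shift '' (shift ⁻¹' B) = B := by
    apply Set.image_preimage_eq
    intro y
    exact ⟨T (-1) y, by rw [shift_eq, T_T]; norm_num⟩
  have := key _ hpre
  rw [hsurj] at this
  rw [fib_apply lam hpre, fib_apply lam hB, this]
lemma orbitZ2_prod (x : Omega) (t : ℤ) :
    orbitZ2 (x, t) = orbitτ x ×ˢ (univ : Set ℤ) := by
  ext ⟨y, s⟩
  constructor
  · rintro ⟨⟨a, b⟩, h⟩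
    rw [act_def] at h
    rw [Prod.ext_iff] at h
    exact ⟨⟨a - b, h.1⟩, trivial⟩
  · rintro ⟨⟨n, hn⟩, -⟩
    refine ⟨(n + (s - t + S x (-n)), s - t + S x (-n)), ?_⟩
    rw [act_def]
    simp only [Prod.mk.injEq]
    constructor
    · rw [show (n + (s - t + S x (-n))) - (s - t + S x (-n)) = n by ring]
      exact hn
    · rw [show (s - t + S x (-n)) - (n + (s - t + S x (-n))) = -n by ring]
      ring

lemma slice_compl_prod_univ (B : Set Omega) (n : ℤ) :
    slice ((B ×ˢ (univ : Set ℤ))ᶜ) n = Bᶜ := by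
  ext y; simp [slice]

lemma lift_ne_zero {ν : Measure Omega} (hν : ν ≠ 0) : lift ν ≠ 0 := by
  intro h0
  have h1 : lift ν (univ ×ˢ ({0} : Set ℤ)) = ν univ := by
    rw [lift, liftc_prod_singleton _ _ MeasurableSet.univ 0, one_mul]
  rw [h0] at h1
  exact hν (Measure.measure_univ_eq_zero.1 (by simpa using h1.symm))

lemma lift_isRadon (ν : Measure Omega) [IsFiniteMeasure ν] : IsRadon (lift ν) := by
  intro K hK
  have hfin : (Prod.snd '' K).Finite := (hK.image continuous_snd).finite_of_discrete
  have hmeas : MeasurableSet ((univ : Set Omega) ×ˢ (Prod.snd '' K)) :=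
    MeasurableSet.univ.prod hfin.countable.measurableSet
  have hsub : K ⊆ (univ : Set Omega) ×ˢ (Prod.snd '' K) := by
    rintro ⟨x, t⟩ hz
    exact ⟨trivial, ⟨(x, t), hz, rfl⟩⟩
  refine lt_of_le_of_lt (measure_mono hsub) ?_
  rw [lift_apply ν hmeas]
  have h1 : ∀ n : ℤ, n ∉ hfin.toFinset → ν (slice ((univ : Set Omega) ×ˢ (Prod.snd '' K)) n) = 0 := by
    intro n hn
    rw [slice_prod, if_neg (by simpa using hn)]
    simp
  rw [tsum_eq_sum h1]
  exact ENNReal.sum_lt_top.2 fun n _ => measure_lt_top ν _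

lemma lift_sigmaFinite (ν : Measure Omega) [SigmaFinite ν] : SigmaFinite (lift ν) := by
  apply Measure.sigmaFinite_of_countable (S :=
    range (fun p : ℕ × ℤ => spanningSets ν p.1 ×ˢ ({p.2} : Set ℤ)))
  · exact countable_range _
  · rintro s ⟨⟨k, n⟩, rfl⟩
    rw [lift, liftc_prod_singleton _ _ (measurableSet_spanningSets ν k) n, one_mul]
    exact measure_spanningSets_lt_top ν k
  · apply eq_univ_of_forall
    rintro ⟨x, t⟩
    have hx : x ∈ ⋃ i, spanningSets ν i := by rw [iUnion_spanningSets]; trivial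
    obtain ⟨k, hk⟩ := mem_iUnion.1 hx
    exact ⟨spanningSets ν k ×ˢ ({t} : Set ℤ), ⟨(k, t), rfl⟩, hk, rfl⟩

lemma fib_sigmaFinite (lam : Measure (Omega × ℤ)) [SigmaFinite lam] :
    SigmaFinite (fib lam) := by
  apply Measure.sigmaFinite_of_countable (S :=
    range (fun k : ℕ => slice (spanningSets lam k) 0))
  · exact countable_range _
  · rintro s ⟨k, rfl⟩
    rw [fib_apply lam (measurableSet_slice (measurableSet_spanningSets lam k) 0)]
    refine lt_of_le_of_lt (measure_mono ?_) (measure_spanningSets_lt_top lam k)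
    rintro ⟨x, t⟩ ⟨hx, ht⟩
    simp only [mem_singleton_iff] at ht
    subst ht
    exact hx
  · apply eq_univ_of_forall
    intro x
    have hx : (x, (0 : ℤ)) ∈ ⋃ i, spanningSets lam i := by rw [iUnion_spanningSets]; trivial
    obtain ⟨k, hk⟩ := mem_iUnion.1 hx
    exact ⟨slice (spanningSets lam k) 0, ⟨k, rfl⟩, hk⟩
noncomputable def cf (β θ : ℝ) : ℤ → ℝ≥0∞ :=
  fun n => ENNReal.ofReal (Real.exp (-(n : ℝ) * β * (1 + θ)))

lemma mbar_eq (β θ : ℝ) (m : Measure Omega) : mbar β θ m = liftc (cf β θ) m := rfl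

lemma cf_ne_zero (β θ : ℝ) : ∀ n : ℤ, cf β θ n ≠ 0 :=
  fun n => (ENNReal.ofReal_pos.2 (Real.exp_pos _)).ne'

lemma cf_ne_top (β θ : ℝ) : ∀ n : ℤ, cf β θ n ≠ ⊤ :=
  fun _ => ENNReal.ofReal_ne_top

lemma one_ne_zero' : ∀ _ : ℤ, (1 : ℝ≥0∞) ≠ 0 := fun _ => one_ne_zero
lemma one_ne_top' : ∀ _ : ℤ, (1 : ℝ≥0∞) ≠ ⊤ := fun _ => ENNReal.one_ne_top

lemma mbar_null_iff (β θ : ℝ) (m : Measure Omega) (A : Set (Omega × ℤ)) :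
    mbar β θ m A = 0 ↔ ∀ n : ℤ, m (slice A n) = 0 := by
  rw [mbar_eq]
  exact liftc_null_iff (cf_ne_zero β θ) (cf_ne_top β θ) m A

lemma lift_null_iff (ν : Measure Omega) (A : Set (Omega × ℤ)) :
    lift ν A = 0 ↔ ∀ n : ℤ, ν (slice A n) = 0 :=
  liftc_null_iff one_ne_zero' one_ne_top' ν A

lemma lift_ac_mbar {β θ : ℝ} {ν m : Measure Omega} (h : ν ≪ m) :
    lift ν ≪ mbar β θ m := by
  rw [mbar_eq]
  exact liftc_ac one_ne_zero' one_ne_top' (cf_ne_zero β θ) (cf_ne_top β θ) h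

lemma mbar_ac_lift {β θ : ℝ} {ν m : Measure Omega} (h : m ≪ ν) :
    mbar β θ m ≪ lift ν := by
  rw [mbar_eq]
  exact liftc_ac (cf_ne_zero β θ) (cf_ne_top β θ) one_ne_zero' one_ne_top' h

lemma mbar_prod_univ_null {β θ : ℝ} {m : Measure Omega} {B : Set Omega} (hB : m B = 0) :
    mbar β θ m (B ×ˢ (univ : Set ℤ)) = 0 := by
  rw [mbar_null_iff]
  intro n
  have : slice (B ×ˢ (univ : Set ℤ)) n = B := by ext y; simp [slice]
  rw [this]
  exact hB

/-- Mutual absolute continuity transfers from `lam ≈ mbar` to `fib lam ≈ m`. -/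
lemma fib_ac {β θ : ℝ} {m : Measure Omega} {lam : Measure (Omega × ℤ)}
    (h1 : lam ≪ mbar β θ m) (h2 : mbar β θ m ≪ lam) :
    fib lam ≪ m ∧ m ≪ fib lam := by
  constructor
  · intro B hB
    set B' := toMeasurable m B with hB'
    have hmB' : MeasurableSet B' := measurableSet_toMeasurable _ _
    have hmB'0 : m B' = 0 := by rw [hB', measure_toMeasurable]; exact hB
    have h3 : mbar β θ m (B' ×ˢ (univ : Set ℤ)) = 0 := mbar_prod_univ_null hmB'0
    have h4 : lam (B' ×ˢ (univ : Set ℤ)) = 0 := h1 h3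
    have h5 : fib lam B' = 0 := by
      rw [fib_apply lam hmB']
      refine measure_mono_null ?_ h4
      rintro ⟨x, t⟩ ⟨hx, _⟩
      exact ⟨hx, trivial⟩
    exact measure_mono_null (subset_toMeasurable _ _) h5
  · intro B hB
    set B'' := toMeasurable (fib lam) B with hB''
    have hmB'' : MeasurableSet B'' := measurableSet_toMeasurable _ _
    have h3 : fib lam B'' = 0 := by rw [hB'', measure_toMeasurable]; exact hB
    have h4 : lam (B'' ×ˢ ({0} : Set ℤ)) = 0 := by rw [← fib_apply lam hmB'']; exact h3
    have h5 : mbar β θ m (B'' ×ˢ ({0} : Set ℤ)) = 0 := h2 h4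
    have h6 : m B'' = 0 := by
      have := (mbar_null_iff β θ m _).1 h5 0
      rw [slice_prod] at this
      simpa using this
    exact measure_mono_null (subset_toMeasurable _ _) h6

lemma fib_ne_zero {lam : Measure (Omega × ℤ)} (hlam : lam ≠ 0) (hInv : InvariantZ2 lam) :
    fib lam ≠ 0 := by
  intro h0
  have h1 : lam (univ ×ˢ ({0} : Set ℤ)) = 0 := by
    rw [← fib_apply lam MeasurableSet.univ, h0]
    rfl
  have h2 : ∀ n : ℤ, lam (univ ×ˢ ({n} : Set ℤ)) = 0 := by
    intro n
    have h := hInv (n, n) (univ ×ˢ ({0} : Set ℤ))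
      (MeasurableSet.univ.prod (measurableSet_singleton 0))
    rw [act_diag_image, zero_add] at h
    rw [h]
    exact h1
  have h3 : lam univ = 0 := by
    have hcover : (univ : Set (Omega × ℤ)) ⊆ ⋃ n : ℤ, univ ×ˢ ({n} : Set ℤ) := by
      rintro ⟨x, t⟩ _
      exact mem_iUnion.2 ⟨t, trivial, rfl⟩
    refine measure_mono_null hcover (le_antisymm ?_ (by simp))
    calc lam (⋃ n : ℤ, univ ×ˢ ({n} : Set ℤ)) ≤ ∑' n : ℤ, lam (univ ×ˢ ({n} : Set ℤ)) :=
          measure_iUnion_le _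
      _ = 0 := by rw [ENNReal.tsum_eq_zero]; exact h2
  exact hlam (Measure.measure_univ_eq_zero.1 h3)
lemma typeI_iff (β θ : ℝ) (m : Measure Omega) :
    TypeIτ m ↔ TypeIZ2 (mbar β θ m) := by
  constructor
  · rintro ⟨x, hx⟩
    refine ⟨(x, 0), ?_⟩
    rw [orbitZ2_prod, mbar_null_iff]
    intro n
    rw [slice_compl_prod_univ]
    exact hx
  · rintro ⟨⟨x, t⟩, hx⟩
    rw [orbitZ2_prod, mbar_null_iff] at hx
    refine ⟨x, ?_⟩
    have := hx 0
    rwa [slice_compl_prod_univ] at this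

lemma finInv_iff (β θ : ℝ) (m : Measure Omega) :
    FinInvτ m ↔ RadInvZ2 (mbar β θ m) := by
  constructor
  · rintro ⟨ν, hν0, hνfin, hνinv, hνm, hmν⟩
    exact ⟨lift ν, lift_ne_zero hν0, lift_isRadon ν, lift_invariant hνinv,
      lift_ac_mbar hνm, mbar_ac_lift hmν⟩
  · rintro ⟨lam, hlam0, hRad, hInv, hlamm, hmlam⟩
    have hfin : IsFiniteMeasure (fib lam) := by
      constructor
      rw [fib_apply lam MeasurableSet.univ]
      exact hRad _ (isCompact_univ.prod isCompact_singleton)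
    obtain ⟨hac1, hac2⟩ := fib_ac hlamm hmlam
    exact ⟨fib lam, fib_ne_zero hlam0 hInv, hfin, fib_shiftInvariant hInv, hac1, hac2⟩

lemma sigInv_iff (β θ : ℝ) (m : Measure Omega) :
    SigInvτ m ↔ SigInvZ2 (mbar β θ m) := by
  constructor
  · rintro ⟨ν, hνsig, hνinv, hνm, hmν⟩
    exact ⟨lift ν, lift_sigmaFinite ν, lift_invariant hνinv,
      lift_ac_mbar hνm, mbar_ac_lift hmν⟩
  · rintro ⟨lam, hlamsig, hInv, hlamm, hmlam⟩
    obtain ⟨hac1, hac2⟩ := fib_ac hlamm hmlam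
    exact ⟨fib lam, fib_sigmaFinite lam, fib_shiftInvariant hInv, hac1, hac2⟩

end Aux

theorem stmt4 (β θ : ℝ) (hθ : 0 < θ) (m : Measure Omega)
    (hprob : IsProbabilityMeasure m) (hconf : IsConformal β θ m)
    (herg : ErgodicShift m) :
    (TypeIτ m ↔ TypeIZ2 (mbar β θ m)) ∧
    (FinInvτ m ↔ RadInvZ2 (mbar β θ m)) ∧
    (SigInvτ m ↔ SigInvZ2 (mbar β θ m)) ∧
    (TypeII1τ m ↔ TypeII1Z2 (mbar β θ m)) ∧
    (TypeIIinfτ m ↔ TypeIIinfZ2 (mbar β θ m)) ∧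
    (TypeIIIτ m ↔ TypeIIIZ2 (mbar β θ m)) := by
  have h1 := typeI_iff β θ m
  have h2 := finInv_iff β θ m
  have h3 := sigInv_iff β θ m
  exact ⟨h1, h2, h3, and_congr (not_congr h1) h2,
    and_congr (not_congr h1) (and_congr h3 (not_congr h2)), not_congr h3⟩


end Stmt4
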